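/- Let V be a finite-dimensional real inner product space and τ ∈ Λ³V identified with τ : V → so(V). Then Σᵢ eᵢ ∧ (τ_{eᵢ} · τ_ξ) = -2 τ_ξ · τ for every ξ ∈ V, where {eᵢ} is an orthonormal basis, · denotes the derivation action of so(V) on forms, τ_{eᵢ}·τ_ξ is identified with the 2-form of the commutator [τ_{eᵢ}, τ_ξ], and τ_ξ · τ is the derivation action of τ_ξ on the 3-form τ. -/
import Mathlib


open scoped RealInnerProductSpace

private lemma key_sum {V : Type*} [NormedAddCommGroup V] [InnerProductSpace ℝ V]
    [FiniteDimensional ℝ V] {ι : Type*} [Fintype ι] (b : OrthonormalBasis ι ℝ V)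
    (M : V →ₗ[ℝ] V) (X Z : V) :
    ∑ i, ⟪b i, X⟫ * ⟪M (b i), Z⟫ = ⟪M X, Z⟫ := by
  have h : X = ∑ i, ⟪b i, X⟫ • b i := by
    conv_lhs => rw [← b.sum_repr X]
    simp [b.repr_apply_apply]
  conv_rhs => rw [h]
  simp [map_sum, sum_inner, real_inner_smul_left]

/-- For a 3-form `τ ∈ Λ³V` identified with `τ : V → so(V)` and `ξ ∈ V`:
`Σᵢ eᵢ ∧ (τ_{eᵢ} · τ_ξ) = -2 τ_ξ · τ`, where `{eᵢ}` is an orthonormal basis, `·` is the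
derivation action of `so(V)` on forms, `τ_{eᵢ} · τ_ξ` is the 2-form of the commutator
`[τ_{eᵢ}, τ_ξ]`, and `τ_ξ · τ` is the derivation action of `τ_ξ` on the 3-form `τ`.
Both sides are evaluated as 3-forms on `(X, Y, Z)`: the wedge of the 1-form `eᵢ` with a
2-form `β` is `(eᵢ ∧ β)(X,Y,Z) = ⟪eᵢ,X⟫β(Y,Z) - ⟪eᵢ,Y⟫β(X,Z) + ⟪eᵢ,Z⟫β(X,Y)`, and
`(τ_ξ · T)(X,Y,Z) = -T(τ_ξX,Y,Z) - T(X,τ_ξY,Z) - T(X,Y,τ_ξZ)` with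
`T(X,Y,Z) = ⟪τ X Y, Z⟫`. -/
theorem stmt8 {V : Type*} [NormedAddCommGroup V] [InnerProductSpace ℝ V]
    [FiniteDimensional ℝ V]
    {ι : Type*} [Fintype ι] (b : OrthonormalBasis ι ℝ V)
    (τ : V →ₗ[ℝ] V →ₗ[ℝ] V)
    (hanti : ∀ x y : V, τ x y = - τ y x)
    (hskew : ∀ x y z : V, ⟪τ x y, z⟫ = - ⟪τ x z, y⟫)
    (ξ : V) :
    ∀ X Y Z : V,
      (∑ i,
        (⟪b i, X⟫ * ⟪τ (b i) (τ ξ Y) - τ ξ (τ (b i) Y), Z⟫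
          - ⟪b i, Y⟫ * ⟪τ (b i) (τ ξ X) - τ ξ (τ (b i) X), Z⟫
          + ⟪b i, Z⟫ * ⟪τ (b i) (τ ξ X) - τ ξ (τ (b i) X), Y⟫))
      = (-2 : ℝ) * (-(⟪τ (τ ξ X) Y, Z⟫) - ⟪τ X (τ ξ Y), Z⟫ - ⟪τ X Y, τ ξ Z⟫) := by
  intro X Y Z
  set MY : V →ₗ[ℝ] V := τ.flip (τ ξ Y) - (τ ξ).comp (τ.flip Y) with hMY
  set MX : V →ₗ[ℝ] V := τ.flip (τ ξ X) - (τ ξ).comp (τ.flip X) with hMX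
  have hMYv : ∀ v : V, MY v = τ v (τ ξ Y) - τ ξ (τ v Y) := fun v => rfl
  have hMXv : ∀ v : V, MX v = τ v (τ ξ X) - τ ξ (τ v X) := fun v => rfl
  have hsum :
      (∑ i,
        (⟪b i, X⟫ * ⟪τ (b i) (τ ξ Y) - τ ξ (τ (b i) Y), Z⟫
          - ⟪b i, Y⟫ * ⟪τ (b i) (τ ξ X) - τ ξ (τ (b i) X), Z⟫
          + ⟪b i, Z⟫ * ⟪τ (b i) (τ ξ X) - τ ξ (τ (b i) X), Y⟫))
      = ⟪MY X, Z⟫ - ⟪MX Y, Z⟫ + ⟪MX Z, Y⟫ := by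
    rw [← key_sum b MY X Z, ← key_sum b MX Y Z, ← key_sum b MX Z Y]
    rw [← Finset.sum_sub_distrib, ← Finset.sum_add_distrib]
    refine Finset.sum_congr rfl fun i _ => ?_
    simp [hMYv, hMXv]
  rw [hsum, hMYv, hMXv, hMXv]
  rw [inner_sub_left, inner_sub_left, inner_sub_left]
  have h1 : ⟪τ Y (τ ξ X), Z⟫ = -⟪τ (τ ξ X) Y, Z⟫ := by
    rw [hanti Y (τ ξ X), inner_neg_left]
  have h2 : ⟪τ ξ (τ Y X), Z⟫ = -⟪τ ξ (τ X Y), Z⟫ := by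
    rw [hanti Y X, map_neg, inner_neg_left]
  have h3 : ⟪τ ξ (τ X Y), Z⟫ = -⟪τ X Y, τ ξ Z⟫ := by
    rw [hskew ξ (τ X Y) Z, real_inner_comm]
  have h4 : ⟪τ Z (τ ξ X), Y⟫ = ⟪τ (τ ξ X) Y, Z⟫ := by
    rw [hskew Z (τ ξ X) Y, hanti Z Y, inner_neg_left, neg_neg,
      hskew Y Z (τ ξ X), hanti Y (τ ξ X), inner_neg_left, neg_neg]
  have h5 : ⟪τ ξ (τ Z X), Y⟫ = -⟪τ X (τ ξ Y), Z⟫ := by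
    have e1 : ⟪τ ξ (τ Z X), Y⟫ = -⟪τ Z X, τ ξ Y⟫ := by
      rw [hskew ξ (τ Z X) Y, real_inner_comm]
    have e2 : ⟪τ X (τ ξ Y), Z⟫ = ⟪τ Z X, τ ξ Y⟫ := by
      rw [hskew X (τ ξ Y) Z, hanti X Z, inner_neg_left, neg_neg,
        hskew Z X (τ ξ Y)]
    rw [e1, e2]
  rw [h1, h2, h3, h4, h5]
  ring
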